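/- Let L ⊂ ℂ be a lattice (the ℤ-span of two elements linearly independent over ℝ) that is stable under multiplication: z·w ∈ L for all z, w ∈ L. Then there exist a positive integer r and an element ζ ∈ ℂ with ζ ∉ ℝ such that: ζ² + b·ζ + c = 0 for some b, c ∈ ℤ (so ζ is a quadratic integer and |ζ|² = c); r divides c; and L is the ℤ-span of the two elements (r : ℂ) and ζ. In particular, |z|² ∈ ℤ for every z ∈ L, i.e. L is integer-normed. -/

import Mathlib

/-- A lattice in `ℂ` stable under multiplication is generated by a positive
integer `r` and a quadratic integer `ζ` with `r ∣ |ζ|²`; in particular it is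
integer-normed. -/
theorem stmt9 (e₁ e₂ : ℂ) (hli : LinearIndependent ℝ ![e₁, e₂])
    (L : Set ℂ) (hL : L = {z : ℂ | ∃ a b : ℤ, z = (a : ℂ) * e₁ + (b : ℂ) * e₂})
    (hmul : ∀ z ∈ L, ∀ w ∈ L, z * w ∈ L) :
    ∃ (r : ℤ) (ζ : ℂ) (b c : ℤ), 0 < r ∧
      ζ ∉ Set.range ((↑) : ℝ → ℂ) ∧
      ζ ^ 2 + (b : ℂ) * ζ + (c : ℂ) = 0 ∧
      Complex.normSq ζ = (c : ℝ) ∧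
      r ∣ c ∧
      L = {z : ℂ | ∃ a b' : ℤ, z = (a : ℂ) * (r : ℂ) + (b' : ℂ) * ζ} ∧
      ∀ z ∈ L, ∃ nz : ℤ, Complex.normSq z = (nz : ℝ) := by
  have hind : ∀ s t : ℝ, s • e₁ + t • e₂ = 0 → s = 0 ∧ t = 0 :=
    fun s t h => LinearIndependent.pair_iff.mp hli s t h
  subst hL
  set L : Set ℂ := {z : ℂ | ∃ a b : ℤ, z = (a : ℂ) * e₁ + (b : ℂ) * e₂} with hLdef
  -- basic closure properties
  have hmem : ∀ a b : ℤ, ((a : ℂ) * e₁ + (b : ℂ) * e₂) ∈ L := fun a b => ⟨a, b, rfl⟩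
  have hcomb : ∀ x ∈ L, ∀ y ∈ L, ∀ p q : ℤ, ((p : ℂ) * x + (q : ℂ) * y) ∈ L := by
    rintro x ⟨a, b, rfl⟩ y ⟨c, d, rfl⟩ p q
    exact ⟨p * a + q * c, p * b + q * d, by push_cast; ring⟩
  -- not both e₁ e₂ real
  have him : e₁.im ≠ 0 ∨ e₂.im ≠ 0 := by
    by_contra h
    push_neg at h
    obtain ⟨h1, h2⟩ := h
    have he1 : e₁ = (e₁.re : ℂ) := Complex.ext (by simp) (by simp [h1])
    have he2 : e₂ = (e₂.re : ℂ) := Complex.ext (by simp) (by simp [h2])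
    have h3 := hind e₂.re (-e₁.re) (by
      simp only [Complex.ext_iff, Complex.add_re, Complex.add_im, Complex.smul_re,
        Complex.smul_im, Complex.zero_re, Complex.zero_im, smul_eq_mul, h1, h2]
      constructor <;> ring)
    have he10 : e₁ = 0 := Complex.ext (by simpa using h3.2) (by simp [h1])
    exact one_ne_zero (hind 1 0 (by simp [he10])).1
  -- a nonreal element of L
  obtain ⟨z₀, hz₀L, hz₀im⟩ : ∃ z₀ ∈ L, z₀.im ≠ 0 := by
    rcases him with h | h
    · exact ⟨e₁, ⟨1, 0, by push_cast; ring⟩, h⟩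
    · exact ⟨e₂, ⟨0, 1, by push_cast; ring⟩, h⟩
  have hz₀ne : z₀ ≠ 0 := fun h => hz₀im (by simp [h])
  -- Step A: find a quadratic-integer element w of L and a nonzero integer m ∈ L
  obtain ⟨a0, b0, h0⟩ := hz₀L
  obtain ⟨a1, b1, h1⟩ := hmul z₀ ⟨a0, b0, h0⟩ z₀ ⟨a0, b0, h0⟩
  obtain ⟨a2, b2, h2⟩ := hmul (z₀ * z₀) ⟨a1, b1, h1⟩ z₀ ⟨a0, b0, h0⟩
  set d : ℤ := a0 * b1 - a1 * b0 with hd_def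
  have hdc : (d : ℂ) = (a0 : ℂ) * b1 - (a1 : ℂ) * b0 := by rw [hd_def]; push_cast; ring
  have hd : d ≠ 0 := by
    intro hd0
    have hdc0 : (a0 : ℂ) * b1 - (a1 : ℂ) * b0 = 0 := by rw [← hdc, hd0]; norm_num
    have hb : (b1 : ℂ) * z₀ = (b0 : ℂ) * (z₀ * z₀) := by
      linear_combination (b1 : ℂ) * h0 - (b0 : ℂ) * h1 + e₁ * hdc0
    have ha : (a1 : ℂ) * z₀ = (a0 : ℂ) * (z₀ * z₀) := by
      linear_combination (a1 : ℂ) * h0 - (a0 : ℂ) * h1 - e₂ * hdc0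
    have h00 : ¬(a0 = 0 ∧ b0 = 0) := by
      rintro ⟨ra, rb⟩
      exact hz₀ne (by rw [h0, ra, rb]; simp)
    rcases not_and_or.mp h00 with ha0 | hb0
    · have hcan : (a1 : ℂ) = (a0 : ℂ) * z₀ :=
        mul_right_cancel₀ hz₀ne (by linear_combination ha)
      have him0 : (a0 : ℝ) * z₀.im = 0 := by
        have := congrArg Complex.im hcan
        simpa using this.symm
      rcases mul_eq_zero.mp him0 with h | h
      · exact ha0 (by exact_mod_cast h)
      · exact hz₀im h
    · have hcan : (b1 : ℂ) = (b0 : ℂ) * z₀ :=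
        mul_right_cancel₀ hz₀ne (by linear_combination hb)
      have him0 : (b0 : ℝ) * z₀.im = 0 := by
        have := congrArg Complex.im hcan
        simpa using this.symm
      rcases mul_eq_zero.mp him0 with h | h
      · exact hb0 (by exact_mod_cast h)
      · exact hz₀im h
  set p : ℤ := a0 * b2 - a2 * b0 with hp_def
  set q : ℤ := a2 * b1 - a1 * b2 with hq_def
  have hpc : (p : ℂ) = (a0 : ℂ) * b2 - (a2 : ℂ) * b0 := by rw [hp_def]; push_cast; ring
  have hqc : (q : ℂ) = (a2 : ℂ) * b1 - (a1 : ℂ) * b2 := by rw [hq_def]; push_cast; ring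
  have hquad : (d : ℂ) * (z₀ * z₀) = (p : ℂ) * z₀ + (q : ℂ) := by
    apply mul_right_cancel₀ hz₀ne
    rw [hdc, hpc, hqc]
    linear_combination ((a0:ℂ)*b1 - (a1:ℂ)*b0) * h2 - ((a0:ℂ)*b2 - (a2:ℂ)*b0) * h1
      - ((a2:ℂ)*b1 - (a1:ℂ)*b2) * h0
  set w : ℂ := (d : ℂ) * z₀ with hw_def
  have hwL : w ∈ L := ⟨d * a0, d * b0, by rw [hw_def, h0]; push_cast; ring⟩
  have hwim : w.im ≠ 0 := by
    have : w.im = (d : ℝ) * z₀.im := by rw [hw_def]; simp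
    rw [this]
    exact mul_ne_zero (Int.cast_ne_zero.mpr hd) hz₀im
  have hwne : w ≠ 0 := fun h => hwim (by simp [h])
  set m : ℤ := d * q with hm_def
  have hmc : (m : ℂ) = (d : ℂ) * (q : ℂ) := by rw [hm_def]; push_cast; ring
  have hwquad : w * w = (p : ℂ) * w + (m : ℂ) := by
    rw [hw_def, hmc]
    linear_combination (d : ℂ) * hquad
  have hm0 : (m : ℂ) ≠ 0 := by
    intro h
    have hcan : w = (p : ℂ) :=
      mul_right_cancel₀ hwne (by rw [h] at hwquad; linear_combination hwquad)
    exact hwim (by rw [hcan]; simp)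
  have hmne : m ≠ 0 := fun h => hm0 (by rw [h]; norm_num)
  have hmL : (m : ℂ) ∈ L := by
    have hx := hcomb (w * w) (hmul w hwL w hwL) w hwL 1 (-p)
    have hrw : (m : ℂ) = ((1:ℤ) : ℂ) * (w * w) + ((-p : ℤ) : ℂ) * w := by
      push_cast
      linear_combination -hwquad
    rw [hrw]; exact hx
  -- Step B: real elements of L are the multiples of a positive integer r
  obtain ⟨A, B, hABm⟩ := hmL
  have hABne : ¬(A = 0 ∧ B = 0) := by
    rintro ⟨rA, rB⟩
    exact hm0 (by rw [hABm, rA, rB]; simp)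
  have hkey : ∀ (x : ℂ) (a b : ℤ), x = (a:ℂ)*e₁ + (b:ℂ)*e₂ →
      ((a*B - b*A : ℤ):ℂ) * e₁ = (B:ℂ) * x - (b:ℂ) * m ∧
      ((a*B - b*A : ℤ):ℂ) * e₂ = (a:ℂ) * m - (A:ℂ) * x := by
    intro x a b hx
    constructor
    · push_cast
      linear_combination (b:ℂ) * hABm - (B:ℂ) * hx
    · push_cast
      linear_combination (A:ℂ) * hx - (a:ℂ) * hABm
  have hker : ∀ (x : ℂ) (a b : ℤ), x = (a:ℂ)*e₁ + (b:ℂ)*e₂ → a*B - b*A = 0 → x.im = 0 := by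
    intro x a b hx hzero
    obtain ⟨hk1, hk2⟩ := hkey x a b hx
    rw [hzero] at hk1 hk2
    have hB : (B:ℂ) * x = (b:ℂ) * m := by
      push_cast at hk1
      linear_combination -hk1
    have hA : (A:ℂ) * x = (a:ℂ) * m := by
      push_cast at hk2
      linear_combination hk2
    have hBim : (B:ℝ) * x.im = 0 := by
      have := congrArg Complex.im hB
      simpa using this
    have hAim : (A:ℝ) * x.im = 0 := by
      have := congrArg Complex.im hA
      simpa using this
    rcases mul_eq_zero.mp hBim with hB0 | h
    · rcases mul_eq_zero.mp hAim with hA0 | h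
      · exact absurd ⟨by exact_mod_cast hA0, by exact_mod_cast hB0⟩ hABne
      · exact h
    · exact h
  have hrealmul : ∀ (x : ℂ) (a b : ℤ), x = (a:ℂ)*e₁ + (b:ℂ)*e₂ → x.im = 0 →
      ((A*A + B*B : ℤ):ℂ) * x = ((a*A + b*B : ℤ):ℂ) * m := by
    intro x a b hx hxim
    obtain ⟨hk1, hk2⟩ := hkey x a b hx
    have e1im : (((a*B - b*A : ℤ):ℂ) * e₁).im = ((a*B - b*A : ℤ):ℝ) * e₁.im := by simp
    have e2im : (((a*B - b*A : ℤ):ℂ) * e₂).im = ((a*B - b*A : ℤ):ℝ) * e₂.im := by simp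
    have hre1 : ((a*B - b*A : ℤ):ℝ) * e₁.im = 0 := by
      rw [← e1im, hk1]
      simp [Complex.sub_im, Complex.mul_im, hxim]
    have hre2 : ((a*B - b*A : ℤ):ℝ) * e₂.im = 0 := by
      rw [← e2im, hk2]
      simp [Complex.sub_im, Complex.mul_im, hxim]
    have hk0 : (a*B - b*A : ℤ) = 0 := by
      rcases him with h | h
      · rcases mul_eq_zero.mp hre1 with h' | h'
        · exact_mod_cast h'
        · exact absurd h' h
      · rcases mul_eq_zero.mp hre2 with h' | h'
        · exact_mod_cast h'
        · exact absurd h' h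
    rw [hk0] at hk1 hk2
    push_cast at hk1 hk2 ⊢
    linear_combination (A:ℂ) * hk2 - (B:ℂ) * hk1
  set C : ℤ := A*A + B*B with hC_def
  have hCpos : 0 < C := by
    rcases not_and_or.mp hABne with h | h
    · have := mul_self_pos.mpr h
      nlinarith [mul_self_nonneg B]
    · have := mul_self_pos.mpr h
      nlinarith [mul_self_nonneg A]
  have hCne : C ≠ 0 := hCpos.ne'
  let H : AddSubgroup ℤ :=
  { carrier := {n : ℤ | ∃ x : ℂ, x ∈ L ∧ x.im = 0 ∧ (C : ℂ) * x = (n : ℂ) * (m : ℂ)}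
    zero_mem' := ⟨0, ⟨0, 0, by simp⟩, by simp, by simp⟩
    add_mem' := by
      rintro n1 n2 ⟨x1, hx1L, hx1im, hx1⟩ ⟨x2, hx2L, hx2im, hx2⟩
      refine ⟨x1 + x2, ?_, by simp [hx1im, hx2im], by push_cast; linear_combination hx1 + hx2⟩
      have := hcomb x1 hx1L x2 hx2L 1 1
      simpa using this
    neg_mem' := by
      rintro n ⟨x, hxL, hxim, hx⟩
      refine ⟨-x, ?_, by simp [hxim], by push_cast; linear_combination -hx⟩
      have := hcomb x hxL x hxL (-1) 0
      simpa using this }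
  obtain ⟨g, hHg⟩ := Int.subgroup_cyclic H
  have hmemH : ∀ n : ℤ, n ∈ H ↔ ∃ k : ℤ, n = k * g := by
    intro n
    rw [hHg, AddSubgroup.mem_closure_singleton]
    constructor
    · rintro ⟨k, rfl⟩
      exact ⟨k, by simp [zsmul_eq_mul]⟩
    · rintro ⟨k, rfl⟩
      exact ⟨k, by simp [zsmul_eq_mul]⟩
  have hgH : g ∈ H := by
    rw [hHg]
    exact AddSubgroup.mem_closure_singleton.mpr ⟨1, one_zsmul g⟩
  obtain ⟨xg, hxgL, hxgim, hxgeq⟩ := hgH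
  have hrealxg : ∀ x ∈ L, x.im = 0 → ∃ k : ℤ, x = (k : ℂ) * xg := by
    rintro x ⟨a, b, hx⟩ hxim
    have hmm := hrealmul x a b hx hxim
    have hnH : (a*A + b*B : ℤ) ∈ H := ⟨x, ⟨a, b, hx⟩, hxim, hmm⟩
    obtain ⟨k, hk⟩ := (hmemH _).mp hnH
    refine ⟨k, ?_⟩
    have hCC : (C:ℂ) * x = (C:ℂ) * ((k:ℂ) * xg) := by
      calc (C:ℂ) * x = ((a*A + b*B : ℤ):ℂ) * m := hmm
        _ = (k:ℂ) * ((g:ℂ) * m) := by rw [hk]; push_cast; ring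
        _ = (k:ℂ) * ((C:ℂ) * xg) := by rw [← hxgeq]
        _ = (C:ℂ) * ((k:ℂ) * xg) := by ring
    exact mul_left_cancel₀ (by exact_mod_cast hCne) hCC
  have hxgne : xg ≠ 0 := by
    intro h
    obtain ⟨k, hk⟩ := hrealxg (m:ℂ) ⟨A, B, hABm⟩ (by simp)
    rw [h, mul_zero] at hk
    exact hm0 hk
  obtain ⟨k0, hk0⟩ : ∃ k0 : ℤ, xg = (k0 : ℂ) := by
    obtain ⟨k, hk⟩ := hrealxg (xg*xg) (hmul xg hxgL xg hxgL) (by simp [Complex.mul_im, hxgim])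
    exact ⟨k, mul_right_cancel₀ hxgne (by linear_combination hk)⟩
  have hk0ne : k0 ≠ 0 := by
    intro h
    exact hxgne (by rw [hk0, h]; simp)
  obtain ⟨r, hrpos, hrk⟩ : ∃ r : ℤ, 0 < r ∧ (k0 = r ∨ k0 = -r) :=
    ⟨(k0.natAbs : ℤ), by omega, by omega⟩
  have hrc : (r:ℂ) = xg ∨ (r:ℂ) = -xg := by
    rcases hrk with h | h
    · left
      rw [hk0]
      exact_mod_cast h.symm
    · right
      rw [hk0]
      have hcast : (k0:ℂ) = -(r:ℂ) := by exact_mod_cast h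
      rw [hcast]
      ring
  have hrL : (r:ℂ) ∈ L := by
    rcases hrc with h | h
    · rw [h]; exact hxgL
    · rw [h]
      have := hcomb xg hxgL xg hxgL (-1) 0
      simpa using this
  have hrealr : ∀ x ∈ L, x.im = 0 → ∃ n : ℤ, x = (n : ℂ) * (r : ℂ) := by
    intro x hxL hxim
    obtain ⟨k, hk⟩ := hrealxg x hxL hxim
    rcases hrc with h | h
    · exact ⟨k, by rw [hk, h]⟩
    · refine ⟨-k, ?_⟩
      rw [hk]
      push_cast
      rw [h]
      ring
  -- Step C: x real implies wedge coordinate vanishes (converse of hker)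
  have hwedge0 : ∀ (x : ℂ) (a b : ℤ), x = (a:ℂ)*e₁ + (b:ℂ)*e₂ → x.im = 0 →
      a*B - b*A = 0 := by
    intro x a b hx hxim
    obtain ⟨hk1, hk2⟩ := hkey x a b hx
    have e1im : (((a*B - b*A : ℤ):ℂ) * e₁).im = ((a*B - b*A : ℤ):ℝ) * e₁.im := by simp
    have e2im : (((a*B - b*A : ℤ):ℂ) * e₂).im = ((a*B - b*A : ℤ):ℝ) * e₂.im := by simp
    have hre1 : ((a*B - b*A : ℤ):ℝ) * e₁.im = 0 := by
      rw [← e1im, hk1]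
      simp [Complex.sub_im, Complex.mul_im, hxim]
    have hre2 : ((a*B - b*A : ℤ):ℝ) * e₂.im = 0 := by
      rw [← e2im, hk2]
      simp [Complex.sub_im, Complex.mul_im, hxim]
    rcases him with h | h
    · rcases mul_eq_zero.mp hre1 with h' | h'
      · exact_mod_cast h'
      · exact absurd h' h
    · rcases mul_eq_zero.mp hre2 with h' | h'
      · exact_mod_cast h'
      · exact absurd h' h
  -- construct the generator ζ
  obtain ⟨u, v, huv⟩ : ∃ u v : ℤ, A * u + B * v = (Int.gcd A B : ℤ) :=
    ⟨Int.gcdA A B, Int.gcdB A B, (Int.gcd_eq_gcd_ab A B).symm⟩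
  set G : ℤ := (Int.gcd A B : ℤ) with hG_def
  have hGne : G ≠ 0 := by
    rw [hG_def]
    intro h
    exact hABne (Int.gcd_eq_zero_iff.mp (by exact_mod_cast h))
  set ζ : ℂ := (v:ℂ) * e₁ + ((-u : ℤ):ℂ) * e₂ with hζ_def
  have hζL : ζ ∈ L := ⟨v, -u, rfl⟩
  have hζim : ζ.im ≠ 0 := by
    intro h
    have hw0 := hwedge0 ζ v (-u) rfl h
    exact hGne (by linarith [huv])
  have hdecomp : ∀ x ∈ L, ∃ n n' : ℤ, x = (n:ℂ) * (r:ℂ) + (n':ℂ) * ζ := by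
    rintro x ⟨a, b, hx⟩
    have hdvd : G ∣ a*B - b*A := by
      rw [hG_def]
      exact dvd_sub (Dvd.dvd.mul_left (Int.gcd_dvd_right A B) a)
        (Dvd.dvd.mul_left (Int.gcd_dvd_left A B) b)
    obtain ⟨n', hn'⟩ := hdvd
    have hyrepr : x - (n':ℂ) * ζ = ((a - n'*v : ℤ):ℂ) * e₁ + ((b + n'*u : ℤ):ℂ) * e₂ := by
      rw [hx, hζ_def]
      push_cast
      ring
    have hywedge : (a - n'*v)*B - (b + n'*u)*A = 0 := by
      linear_combination hn' - n' * huv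
    have hyim := hker _ _ _ hyrepr hywedge
    have hyL : x - (n':ℂ) * ζ ∈ L := ⟨a - n'*v, b + n'*u, hyrepr⟩
    obtain ⟨n, hn⟩ := hrealr _ hyL hyim
    exact ⟨n, n', by linear_combination hn⟩
  have hcontain : ∀ n n' : ℤ, ((n:ℂ) * (r:ℂ) + (n':ℂ) * ζ) ∈ L :=
    fun n n' => hcomb _ hrL _ hζL n n'
  -- ζ is a quadratic integer
  obtain ⟨n, n', hzeta2⟩ := hdecomp (ζ*ζ) (hmul ζ hζL ζ hζL)
  have heq : ζ^2 + ((-n' : ℤ):ℂ) * ζ + ((-(n*r) : ℤ):ℂ) = 0 := by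
    push_cast
    linear_combination hzeta2
  have hconj : ((starRingEnd ℂ) ζ)^2 + ((-n' : ℤ):ℂ) * ((starRingEnd ℂ) ζ)
      + ((-(n*r) : ℤ):ℂ) = 0 := by
    have := congrArg (starRingEnd ℂ) heq
    simp only [map_add, map_mul, map_pow, map_intCast, map_zero] at this
    exact this
  have hne : ζ - (starRingEnd ℂ) ζ ≠ 0 := by
    intro h
    exact hζim (Complex.conj_eq_iff_im.mp (sub_eq_zero.mp h).symm)
  have hfac : (ζ - (starRingEnd ℂ) ζ) * (ζ + (starRingEnd ℂ) ζ + ((-n' : ℤ):ℂ)) = 0 := by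
    linear_combination heq - hconj
  have hsum : ζ + (starRingEnd ℂ) ζ + ((-n' : ℤ):ℂ) = 0 :=
    (mul_eq_zero.mp hfac).resolve_left hne
  have hprod : ζ * (starRingEnd ℂ) ζ = ((-(n*r) : ℤ):ℂ) := by
    linear_combination ζ * hsum - heq
  have hsum' : ζ + (starRingEnd ℂ) ζ = (n' : ℂ) := by
    push_cast at hsum
    linear_combination hsum
  have hprod' : ζ * (starRingEnd ℂ) ζ = -((n:ℂ) * (r:ℂ)) := by
    push_cast at hprod
    linear_combination hprod
  refine ⟨r, ζ, -n', -(n*r), hrpos, ?_, heq, ?_, ⟨-n, by ring⟩, ?_, ?_⟩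
  · rintro ⟨y, hy⟩
    exact hζim (by rw [← hy]; simp)
  · have hcast : ((Complex.normSq ζ : ℝ):ℂ) = ((-(n*r) : ℤ):ℂ) := by
      rw [← Complex.mul_conj]
      exact hprod
    exact_mod_cast hcast
  · ext z
    simp only [Set.mem_setOf_eq]
    constructor
    · intro hz
      exact hdecomp z hz
    · rintro ⟨n1, n2, rfl⟩
      exact hcontain n1 n2
  · intro z hz
    obtain ⟨a', b', hz'⟩ := hdecomp z hz
    refine ⟨a'*a'*r*r + a'*b'*r*n' - b'*b'*(n*r), ?_⟩
    have hconjz : (starRingEnd ℂ) z = (a':ℂ) * (r:ℂ) + (b':ℂ) * ((starRingEnd ℂ) ζ) := by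
      rw [hz']
      simp only [map_add, map_mul, map_intCast]
    have hcast : ((Complex.normSq z : ℝ):ℂ) = ((a'*a'*r*r + a'*b'*r*n' - b'*b'*(n*r) : ℤ):ℂ) := by
      rw [← Complex.mul_conj, hconjz, hz']
      push_cast
      linear_combination ((a':ℂ) * (b':ℂ) * (r:ℂ)) * hsum' + ((b':ℂ) * (b':ℂ)) * hprod'
    exact_mod_cast hcast
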